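/- Under the action of O(n) on Sym(n,ℝ) by A · X = A X Aᵀ, every SO(n)-invariant symmetric trilinear form on Sym(n,ℝ) is automatically O(n)-invariant. -/

import Mathlib

open Matrix

/-- The submodule of symmetric `n × n` real matrices. -/
def symSubmodule (n : ℕ) : Submodule ℝ (Matrix (Fin n) (Fin n) ℝ) where
  carrier := {X | X.IsSymm}
  add_mem' := fun ha hb => ha.add hb
  zero_mem' := by simp [Matrix.IsSymm]
  smul_mem' := fun c X hX => hX.smul c

/-- The type of symmetric `n × n` real matrices `Sym(n,ℝ)`. -/
abbrev SymMat (n : ℕ) := ↥(symSubmodule n)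

/-- A map `V → V → V → ℝ` is a symmetric trilinear form if it is linear in the
first argument and fully symmetric. -/
def IsSymTrilinear {V : Type*} [AddCommGroup V] [Module ℝ V]
    (C : V → V → V → ℝ) : Prop :=
  (∀ y z : V, IsLinearMap ℝ fun x => C x y z) ∧
  (∀ x y z : V, C x y z = C y x z) ∧
  (∀ x y z : V, C x y z = C x z y)

/-- Conjugation `X ↦ A X Aᵀ` of a symmetric matrix is symmetric. -/
theorem conj_isSymm {n : ℕ} (A : Matrix (Fin n) (Fin n) ℝ)
    (X : SymMat n) : (A * (X : Matrix (Fin n) (Fin n) ℝ) * Aᵀ).IsSymm := by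
  have hX : (X : Matrix (Fin n) (Fin n) ℝ)ᵀ = (X : Matrix (Fin n) (Fin n) ℝ) := X.2
  unfold Matrix.IsSymm
  rw [Matrix.transpose_mul, Matrix.transpose_mul, Matrix.transpose_transpose,
    hX, Matrix.mul_assoc]

/-- The action of a matrix `A` on `Sym(n,ℝ)` by `X ↦ A X Aᵀ`. -/
def conjS {n : ℕ} (A : Matrix (Fin n) (Fin n) ℝ) (X : SymMat n) : SymMat n :=
  ⟨A * (X : Matrix (Fin n) (Fin n) ℝ) * Aᵀ, conj_isSymm A X⟩

/- ### Auxiliary lemmas -/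

lemma conjS_mul {n : ℕ} (A B : Matrix (Fin n) (Fin n) ℝ) (X : SymMat n) :
    conjS (A * B) X = conjS A (conjS B X) := by
  apply Subtype.ext
  simp [conjS, Matrix.transpose_mul, Matrix.mul_assoc]

lemma conjS_add {n : ℕ} (A : Matrix (Fin n) (Fin n) ℝ) (X Y : SymMat n) :
    conjS A (X + Y) = conjS A X + conjS A Y := by
  apply Subtype.ext
  simp [conjS, Matrix.mul_add, Matrix.add_mul]

lemma conjS_smul {n : ℕ} (A : Matrix (Fin n) (Fin n) ℝ) (c : ℝ) (X : SymMat n) :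
    conjS A (c • X) = c • conjS A X := by
  apply Subtype.ext
  simp [conjS, Matrix.mul_smul, Matrix.smul_mul]

/-- Polarization: a symmetric trilinear form vanishing on the diagonal vanishes. -/
lemma polarization {V : Type*} [AddCommGroup V] [Module ℝ V]
    (d : V → V → V → ℝ)
    (hlin : ∀ y z : V, IsLinearMap ℝ fun x => d x y z)
    (h12 : ∀ x y z : V, d x y z = d y x z)
    (h23 : ∀ x y z : V, d x y z = d x z y)
    (hcube : ∀ x : V, d x x x = 0) :
    ∀ x y z : V, d x y z = 0 := by
  have add1 : ∀ x x' y z : V, d (x + x') y z = d x y z + d x' y z :=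
    fun x x' y z => (hlin y z).map_add x x'
  have neg1 : ∀ x y z : V, d (-x) y z = - d x y z :=
    fun x y z => (hlin y z).map_neg x
  have add2 : ∀ x y y' z : V, d x (y + y') z = d x y z + d x y' z := by
    intro x y y' z
    rw [h12, add1, h12, h12 y' x]
  have add3 : ∀ x y z z' : V, d x y (z + z') = d x y z + d x y z' := by
    intro x y z z'
    rw [h23, add2, h23, h23 x z' y]
  have neg3 : ∀ x y z : V, d x y (-z) = - d x y z := by
    intro x y z
    rw [h23, h12, neg1, h12, h23]
  have expand : ∀ x y : V, d (x + y) (x + y) (x + y)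
      = d x x x + 3 * d x x y + 3 * d x y y + d y y y := by
    intro x y
    simp only [add1, add2, add3]
    have e1 : d x y x = d x x y := h23 x y x
    have e2 : d y x x = d x y x := (h12 x y x).symm
    have e3 : d x y y = d y x y := h12 x y y
    have e4 : d y x y = d y y x := h23 y x y
    linarith
  have neg2 : ∀ x y z : V, d x (-y) z = - d x y z := by
    intro x y z
    rw [h12, neg1, h12]
  have key2 : ∀ x y : V, d x y y = 0 := by
    intro x y
    have h1 := expand x y
    have h2 := expand x (-y)
    simp only [hcube] at h1
    simp only [neg1, neg2, neg3, neg_neg, hcube] at h2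
    linarith
  intro x y z
  have h1 := key2 x (y + z)
  rw [add2, add3, add3, key2, key2 x z, h23 x z y] at h1
  linarith

/-- Every real symmetric matrix is `conjS Q Λ` for an orthogonal `Q` and diagonal `Λ`. -/
lemma sym_diag {n : ℕ} (X : SymMat n) :
    ∃ (Q : Matrix (Fin n) (Fin n) ℝ) (v : Fin n → ℝ),
      Q * Qᵀ = 1 ∧ X = conjS Q ⟨Matrix.diagonal v, Matrix.isSymm_diagonal v⟩ := by
  have hH : (X : Matrix (Fin n) (Fin n) ℝ).IsHermitian := by
    rw [Matrix.IsHermitian, Matrix.conjTranspose_eq_transpose_of_trivial]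
    exact X.2
  refine ⟨(hH.eigenvectorUnitary : Matrix (Fin n) (Fin n) ℝ), hH.eigenvalues, ?_, ?_⟩
  · have := (Matrix.mem_unitaryGroup_iff.mp hH.eigenvectorUnitary.2)
    rwa [Matrix.star_eq_conjTranspose, Matrix.conjTranspose_eq_transpose_of_trivial] at this
  · apply Subtype.ext
    have := hH.spectral_theorem
    rw [Unitary.conjStarAlgAut_apply, Matrix.star_eq_conjTranspose, Matrix.conjTranspose_eq_transpose_of_trivial] at this
    simpa [conjS] using this

/-- Orthogonal matrices have determinant `±1`. -/
lemma det_pm {n : ℕ} (A : Matrix (Fin n) (Fin n) ℝ) (hA : A * Aᵀ = 1) :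
    A.det = 1 ∨ A.det = -1 := by
  have h : A.det * A.det = 1 := by
    have := congrArg Matrix.det hA
    rwa [Matrix.det_mul, Matrix.det_transpose, Matrix.det_one] at this
  exact mul_self_eq_one_iff.mp h

section Main

variable {n : ℕ} (C : SymMat n → SymMat n → SymMat n → ℝ)

/-- The cubic form is invariant at diagonal matrices under any orthogonal matrix. -/
lemma cube_diag
    (hSO : ∀ A : Matrix (Fin n) (Fin n) ℝ, A * Aᵀ = 1 → A.det = 1 →
      ∀ X Y Z : SymMat n, C (conjS A X) (conjS A Y) (conjS A Z) = C X Y Z)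
    (M : Matrix (Fin n) (Fin n) ℝ) (hM : M * Mᵀ = 1) (v : Fin n → ℝ) :
    ∀ L : SymMat n, (L : Matrix (Fin n) (Fin n) ℝ) = Matrix.diagonal v →
      C (conjS M L) (conjS M L) (conjS M L) = C L L L := by
  intro L hL
  rcases det_pm M hM with h1 | h1
  · exact hSO M hM h1 L L L
  · -- det M = -1 : compose with a sign flip
    have hn : n ≠ 0 := by
      rintro rfl
      rw [Matrix.det_fin_zero] at h1
      norm_num at h1
    have hpos : 0 < n := Nat.pos_of_ne_zero hn
    set i0 : Fin n := ⟨0, hpos⟩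
    set D : Matrix (Fin n) (Fin n) ℝ :=
      Matrix.diagonal (fun i => if i = i0 then (-1 : ℝ) else 1) with hD
    have hDT : Dᵀ = D := Matrix.diagonal_transpose _
    have hDD : D * D = 1 := by
      rw [hD, Matrix.diagonal_mul_diagonal, ← Matrix.diagonal_one]
      have hfun : (fun i => (if i = i0 then (-1:ℝ) else 1) * (if i = i0 then (-1:ℝ) else 1))
          = fun _ : Fin n => (1:ℝ) := by
        funext i
        by_cases h : i = i0 <;> simp [h]
      rw [hfun]
    have hDdet : D.det = -1 := by
      rw [hD, Matrix.det_diagonal]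
      rw [Finset.prod_eq_single i0 (fun b _ hb => by simp [hb]) (by simp)]
      simp
    have hMD : (M * D) * (M * D)ᵀ = 1 := by
      rw [Matrix.transpose_mul, hDT]
      calc M * D * (D * Mᵀ) = M * (D * D) * Mᵀ := by
            rw [Matrix.mul_assoc, Matrix.mul_assoc, Matrix.mul_assoc]
        _ = 1 := by rw [hDD, Matrix.mul_one, hM]
    have hMDdet : (M * D).det = 1 := by
      rw [Matrix.det_mul, h1, hDdet]; norm_num
    have hDL : conjS D L = L := by
      apply Subtype.ext
      show D * (L : Matrix (Fin n) (Fin n) ℝ) * Dᵀ = L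
      rw [hDT, hL, hD, Matrix.diagonal_mul_diagonal, Matrix.diagonal_mul_diagonal]
      have hfun : (fun i => (if i = i0 then (-1:ℝ) else 1) * v i * (if i = i0 then (-1:ℝ) else 1))
          = v := by
        funext i
        by_cases h : i = i0 <;> simp [h]
      rw [hfun]
    have key : conjS (M * D) L = conjS M L := by
      rw [conjS_mul, hDL]
    rw [← key]
    exact hSO (M * D) hMD hMDdet L L L

/-- The cubic form is invariant under every orthogonal matrix. -/
lemma cube_inv
    (hSO : ∀ A : Matrix (Fin n) (Fin n) ℝ, A * Aᵀ = 1 → A.det = 1 →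
      ∀ X Y Z : SymMat n, C (conjS A X) (conjS A Y) (conjS A Z) = C X Y Z)
    (B : Matrix (Fin n) (Fin n) ℝ) (hB : B * Bᵀ = 1) (X : SymMat n) :
    C (conjS B X) (conjS B X) (conjS B X) = C X X X := by
  obtain ⟨Q, v, hQ, hX⟩ := sym_diag X
  set L : SymMat n := ⟨Matrix.diagonal v, Matrix.isSymm_diagonal v⟩ with hLdef
  have hLcoe : (L : Matrix (Fin n) (Fin n) ℝ) = Matrix.diagonal v := rfl
  have hBQ : (B * Q) * (B * Q)ᵀ = 1 := by
    rw [Matrix.transpose_mul]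
    calc B * Q * (Qᵀ * Bᵀ) = B * (Q * Qᵀ) * Bᵀ := by
          rw [Matrix.mul_assoc, Matrix.mul_assoc, Matrix.mul_assoc]
      _ = 1 := by rw [hQ, Matrix.mul_one, hB]
  rw [hX, ← conjS_mul]
  rw [cube_diag C hSO (B * Q) hBQ v L hLcoe, ← cube_diag C hSO Q hQ v L hLcoe]

end Main

/-- Every `SO(n)`-invariant symmetric trilinear form on `Sym(n,ℝ)` (under the
action `A · X = A X Aᵀ`) is automatically `O(n)`-invariant. -/
theorem stmt_13 (n : ℕ) (C : SymMat n → SymMat n → SymMat n → ℝ)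
    (hC : IsSymTrilinear C)
    (hSO : ∀ A : Matrix (Fin n) (Fin n) ℝ, A * Aᵀ = 1 → A.det = 1 →
      ∀ X Y Z : SymMat n, C (conjS A X) (conjS A Y) (conjS A Z) = C X Y Z) :
    ∀ A : Matrix (Fin n) (Fin n) ℝ, A * Aᵀ = 1 →
      ∀ X Y Z : SymMat n, C (conjS A X) (conjS A Y) (conjS A Z) = C X Y Z := by
  intro A hA
  obtain ⟨hlin, h12, h23⟩ := hC
  set d : SymMat n → SymMat n → SymMat n → ℝ :=
    fun x y z => C (conjS A x) (conjS A y) (conjS A z) - C x y z with hd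
  have hzero : ∀ x y z, d x y z = 0 := by
    apply polarization d
    · intro y z
      constructor
      · intro x x'
        simp only [hd, conjS_add, (hlin (conjS A y) (conjS A z)).map_add, (hlin y z).map_add]
        ring
      · intro c x
        simp only [hd, conjS_smul, (hlin (conjS A y) (conjS A z)).map_smul,
          (hlin y z).map_smul, smul_eq_mul]
        ring
    · intro x y z
      simp only [hd, h12 (conjS A x) (conjS A y) (conjS A z), h12 x y z]
    · intro x y z
      simp only [hd, h23 (conjS A x) (conjS A y) (conjS A z), h23 x y z]
    · intro x
      simp only [hd, cube_inv C hSO A hA x, sub_self]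
  intro X Y Z
  have := hzero X Y Z
  simp only [hd] at this
  linarith
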